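/- The volume of a cone does not change when the apex moves parallel to the base plane: with base S ⊆ ℝ² at height 0 and apexes a = (a₁, a₂, h), a' = (a₁', a₂', h) at the same height h > 0, the cones over S with apex a and with apex a' have equal volume. -/

import Mathlib

open MeasureTheory

/-- The shear homeomorphism `(p, z) ↦ (p + (z/h) • v, z)` on `ℝ² × ℝ`. -/
noncomputable def shearHomeo (v : ℝ × ℝ) (h : ℝ) : ((ℝ × ℝ) × ℝ) ≃ₜ ((ℝ × ℝ) × ℝ) where
  toFun x := (x.1 + (x.2 / h) • v, x.2)
  invFun x := (x.1 - (x.2 / h) • v, x.2)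
  left_inv x := by simp
  right_inv x := by simp
  continuous_toFun := by fun_prop
  continuous_invFun := by fun_prop

lemma shear_measurePreserving (v : ℝ × ℝ) (h : ℝ) :
    MeasurePreserving (shearHomeo v h) volume volume := by
  have hswap : MeasurePreserving (Prod.swap : ((ℝ × ℝ) × ℝ) → (ℝ × ((ℝ × ℝ)))) volume volume := by
    rw [Measure.volume_eq_prod, Measure.volume_eq_prod]; exact Measure.measurePreserving_swap
  have hswap' : MeasurePreserving (Prod.swap : (ℝ × (ℝ × ℝ)) → ((ℝ × ℝ) × ℝ)) volume volume := by
    rw [Measure.volume_eq_prod, Measure.volume_eq_prod]; exact Measure.measurePreserving_swap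
  have hskew : MeasurePreserving
      (fun p : ℝ × (ℝ × ℝ) => (id p.1, p.2 + (p.1 / h) • v)) volume volume := by
    rw [Measure.volume_eq_prod ℝ (ℝ × ℝ)]
    refine MeasurePreserving.skew_product (g := fun z p => p + (z / h) • v) (MeasurePreserving.id _)
      (by fun_prop) (Filter.Eventually.of_forall fun z => ?_)
    exact (measurePreserving_add_right volume ((z / h) • v)).map_eq
  have H : MeasurePreserving
      (Prod.swap ∘ (fun p : ℝ × (ℝ × ℝ) => (id p.1, p.2 + (p.1 / h) • v)) ∘ Prod.swap)
      volume volume := (hswap'.comp hskew).comp hswap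
  convert H using 1
  rfl

theorem cone_volume_apex_shear_invariant
    (S : Set (ℝ × ℝ)) (hS : MeasurableSet S)
    (a a' : (ℝ × ℝ) × ℝ) (h : ℝ) (hh : 0 < h) (ha : a.2 = h) (ha' : a'.2 = h) :
    volume {x : (ℝ × ℝ) × ℝ | ∃ p ∈ S, ∃ t ∈ Set.Icc (0 : ℝ) 1,
        x = (1 - t) • ((p, (0 : ℝ)) : (ℝ × ℝ) × ℝ) + t • a} =
      volume {x : (ℝ × ℝ) × ℝ | ∃ p ∈ S, ∃ t ∈ Set.Icc (0 : ℝ) 1,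
        x = (1 - t) • ((p, (0 : ℝ)) : (ℝ × ℝ) × ℝ) + t • a'} := by
  set v : ℝ × ℝ := a'.1 - a.1 with hv
  set e : ((ℝ × ℝ) × ℝ) ≃ᵐ ((ℝ × ℝ) × ℝ) := (shearHomeo v h).toMeasurableEquiv with he
  -- `e` maps points of cone `a` to points of cone `a'`
  have key : ∀ (p : ℝ × ℝ) (t : ℝ),
      e ((1 - t) • ((p, (0 : ℝ)) : (ℝ × ℝ) × ℝ) + t • a)
        = (1 - t) • ((p, (0 : ℝ)) : (ℝ × ℝ) × ℝ) + t • a' := by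
    intro p t
    have hx : (1 - t) • ((p, (0 : ℝ)) : (ℝ × ℝ) × ℝ) + t • a
        = ((1 - t) • p + t • a.1, t * h) := by
      refine Prod.ext rfl ?_
      show (1 - t) • (0 : ℝ) + t • a.2 = t * h
      rw [ha]; simp
    have hx' : (1 - t) • ((p, (0 : ℝ)) : (ℝ × ℝ) × ℝ) + t • a'
        = ((1 - t) • p + t • a'.1, t * h) := by
      refine Prod.ext rfl ?_
      show (1 - t) • (0 : ℝ) + t • a'.2 = t * h
      rw [ha']; simp
    rw [hx, hx']
    show ((1 - t) • p + t • a.1 + ((t * h) / h) • v, t * h)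
        = ((1 - t) • p + t • a'.1, t * h)
    rw [mul_div_assoc, div_self hh.ne', mul_one]
    refine Prod.ext ?_ rfl
    show (1 - t) • p + t • a.1 + t • (a'.1 - a.1) = (1 - t) • p + t • a'.1
    module
  have hpre : e ⁻¹' {x : (ℝ × ℝ) × ℝ | ∃ p ∈ S, ∃ t ∈ Set.Icc (0 : ℝ) 1,
        x = (1 - t) • ((p, (0 : ℝ)) : (ℝ × ℝ) × ℝ) + t • a'}
      = {x : (ℝ × ℝ) × ℝ | ∃ p ∈ S, ∃ t ∈ Set.Icc (0 : ℝ) 1,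
        x = (1 - t) • ((p, (0 : ℝ)) : (ℝ × ℝ) × ℝ) + t • a} := by
    ext x
    simp only [Set.mem_preimage, Set.mem_setOf_eq]
    constructor
    · rintro ⟨p, hp, t, ht, hx⟩
      refine ⟨p, hp, t, ht, ?_⟩
      apply e.injective
      rw [hx, key]
    · rintro ⟨p, hp, t, ht, hx⟩
      exact ⟨p, hp, t, ht, by rw [hx, key]⟩
  calc volume {x : (ℝ × ℝ) × ℝ | ∃ p ∈ S, ∃ t ∈ Set.Icc (0 : ℝ) 1,
        x = (1 - t) • ((p, (0 : ℝ)) : (ℝ × ℝ) × ℝ) + t • a}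
      = volume (e ⁻¹' {x : (ℝ × ℝ) × ℝ | ∃ p ∈ S, ∃ t ∈ Set.Icc (0 : ℝ) 1,
        x = (1 - t) • ((p, (0 : ℝ)) : (ℝ × ℝ) × ℝ) + t • a'}) := by rw [hpre]
    _ = volume.map e {x : (ℝ × ℝ) × ℝ | ∃ p ∈ S, ∃ t ∈ Set.Icc (0 : ℝ) 1,
        x = (1 - t) • ((p, (0 : ℝ)) : (ℝ × ℝ) × ℝ) + t • a'} := (e.map_apply _).symm
    _ = volume {x : (ℝ × ℝ) × ℝ | ∃ p ∈ S, ∃ t ∈ Set.Icc (0 : ℝ) 1,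
        x = (1 - t) • ((p, (0 : ℝ)) : (ℝ × ℝ) × ℝ) + t • a'} := by
        rw [show (e : ((ℝ × ℝ) × ℝ) → ((ℝ × ℝ) × ℝ)) = shearHomeo v h from rfl,
          (shear_measurePreserving v h).map_eq]
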